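/- For every mass function m on Ω and all subsets A, E ⊆ Ω, the implicability function of the conditioning of m given E satisfies b_{m ⊚∩ m_E}(A) = b_m((E\A)ᶜ) = b_m(Eᶜ ∪ A), where complements are taken in Ω. -/
import Mathlib


open Finset

/-- A mass function on a finite frame `Ω`: nonnegative and sums to one over all subsets. -/
def IsMass {Ω : Type*} [Fintype Ω] (m : Finset Ω → ℝ) : Prop :=
  (∀ A, 0 ≤ m A) ∧ ∑ A : Finset Ω, m A = 1

/-- Commonality (inclusion functional): `q m A = ∑_{E ⊇ A} m E`. -/
def commonality {Ω : Type*} [Fintype Ω] [DecidableEq Ω] (m : Finset Ω → ℝ) (A : Finset Ω) : ℝ :=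
  ∑ E : Finset Ω, if A ⊆ E then m E else 0

/-- Plausibility (hitting functional): `pl m A = ∑_{E ∩ A ≠ ∅} m E`. -/
def plaus {Ω : Type*} [Fintype Ω] [DecidableEq Ω] (m : Finset Ω → ℝ) (A : Finset Ω) : ℝ :=
  ∑ E : Finset Ω, if E ∩ A ≠ ∅ then m E else 0

/-- Implicability: `b m A = ∑_{E ⊆ A} m E`. -/
def implic {Ω : Type*} [Fintype Ω] [DecidableEq Ω] (m : Finset Ω → ℝ) (A : Finset Ω) : ℝ :=
  ∑ E : Finset Ω, if E ⊆ A then m E else 0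

/-- Conjunctive combination: `(m1 ⊚∩ m2)(E) = ∑_{A ∩ B = E} m1 A * m2 B`. -/
def conjC {Ω : Type*} [Fintype Ω] [DecidableEq Ω] (m1 m2 : Finset Ω → ℝ) (E : Finset Ω) : ℝ :=
  ∑ A : Finset Ω, ∑ B : Finset Ω, if A ∩ B = E then m1 A * m2 B else 0

/-- Disjunctive combination: `(m1 ⊚∪ m2)(E) = ∑_{A ∪ B = E} m1 A * m2 B`. -/
def disjC {Ω : Type*} [Fintype Ω] [DecidableEq Ω] (m1 m2 : Finset Ω → ℝ) (E : Finset Ω) : ℝ :=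
  ∑ A : Finset Ω, ∑ B : Finset Ω, if A ∪ B = E then m1 A * m2 B else 0

/-- Categorical mass function `m_A`. -/
def categorical {Ω : Type*} [Fintype Ω] [DecidableEq Ω] (A : Finset Ω) : Finset Ω → ℝ :=
  fun E => if E = A then 1 else 0

lemma iteswap {p q : Prop} [Decidable p] [Decidable q] (r : ℝ) :
    (if p then (if q then r else 0) else 0) = (if q then (if p then r else 0) else 0) := by
  split_ifs <;> rfl

/-- For every mass function `m` and subsets `A, E ⊆ Ω`, the implicability of
the conditioning of `m` given `E` satisfies
`b_{m ⊚∩ m_E}(A) = b_m((E \ A)ᶜ) = b_m(Eᶜ ∪ A)`. -/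
theorem implic_conditioning {Ω : Type*} [Fintype Ω] [DecidableEq Ω]
    (m : Finset Ω → ℝ) (hm : IsMass m) (A E : Finset Ω) :
    implic (conjC m (categorical E)) A = implic m ((E \ A)ᶜ) ∧
      implic (conjC m (categorical E)) A = implic m (Eᶜ ∪ A) := by
  have key : implic (conjC m (categorical E)) A = ∑ B : Finset Ω, if B ∩ E ⊆ A then m B else 0 := by
    unfold implic conjC categorical
    have h1 : ∀ F B : Finset Ω,
        (∑ C : Finset Ω, if B ∩ C = F then m B * (if C = E then 1 else 0) else 0)
          = if B ∩ E = F then m B else 0 := by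
      intro F B
      have hC : ∀ C : Finset Ω, (if B ∩ C = F then m B * (if C = E then 1 else 0) else 0)
          = (if C = E then (if B ∩ C = F then m B else 0) else 0) := by
        intro C; by_cases h1 : B ∩ C = F <;> by_cases h2 : C = E <;> simp [h1, h2]
      simp only [hC, Finset.sum_ite_eq' Finset.univ E, Finset.mem_univ, if_true]
    have h2 : ∀ (p : Prop) [Decidable p] (f : Finset Ω → ℝ),
        (if p then ∑ B : Finset Ω, f B else 0) = ∑ B : Finset Ω, if p then f B else 0 := by
      intro p _ f; split_ifs <;> simp
    simp only [h1, h2]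
    rw [Finset.sum_comm]
    apply Finset.sum_congr rfl
    intro B _
    rw [Finset.sum_eq_single (B ∩ E)]
    · by_cases h : B ∩ E ⊆ A <;> simp [h]
    · intro F _ hF
      by_cases h : F ⊆ A <;> simp [h]
      intro hh; exact absurd hh.symm hF
    · simp
  have hiff : ∀ B : Finset Ω, (B ∩ E ⊆ A) ↔ (B ⊆ Eᶜ ∪ A) := by
    intro B
    constructor
    · intro h x hx
      by_cases hxE : x ∈ E
      · exact Finset.mem_union_right _ (h (Finset.mem_inter.2 ⟨hx, hxE⟩))
      · exact Finset.mem_union_left _ (Finset.mem_compl.2 hxE)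
    · intro h x hx
      rcases Finset.mem_inter.1 hx with ⟨hxB, hxE⟩
      rcases Finset.mem_union.1 (h hxB) with h' | h'
      · exact absurd hxE (Finset.mem_compl.1 h')
      · exact h'
  have key2 : implic (conjC m (categorical E)) A = implic m (Eᶜ ∪ A) := by
    rw [key]; unfold implic
    exact Finset.sum_congr rfl fun B _ => by simp only [hiff B]
  have hset : (E \ A)ᶜ = Eᶜ ∪ A := by
    ext x; simp [Finset.mem_compl, Finset.mem_sdiff, or_iff_not_imp_left]
  exact ⟨by rw [hset]; exact key2, key2⟩
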